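/- Let ξ(x) = (1−λ)x^s + λx^p with λ ∈ (0,1), integers 3 ≤ s, p ≥ s+2, and let q ∈ (0,1), z₂ > 0 solve the system and z₁ be given by 1 + z₁ + z₂ = q(ξ'(1)−ξ'(q))/(ξ'(q)(1−q)). Define h₂(u) = (ξ'(u)−ξ'(q))(1 + z₂ − q − uz₂) − (u−q)(ξ'(1)−ξ'(q)). Suppose h₂(0) < 0, h₂(q) = 0, h₂'(q) ≤ 0, h₂(1) = 0, and h₂(q') = 0 for some q' ∈ (q,1). Then h₂ has exactly one zero in (q, 1), and h₂ < 0 on some punctured interval (q, q+δ). -/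

import Mathlib

open Set Filter

namespace DescH2

noncomputable section

def evalL (L : List (ℝ × ℕ)) (u : ℝ) : ℝ := (L.map fun p => p.1 * u ^ p.2).sum

lemma evalL_nil (u : ℝ) : evalL [] u = 0 := rfl

lemma evalL_cons (p : ℝ × ℕ) (M : List (ℝ × ℕ)) (u : ℝ) :
    evalL (p :: M) u = p.1 * u ^ p.2 + evalL M u := by
  simp [evalL]

def derivL (L : List (ℝ × ℕ)) : List (ℝ × ℕ) := L.map fun p => (p.1 * p.2, p.2 - 1)

lemma hasDerivAt_evalL (L : List (ℝ × ℕ)) (u : ℝ) :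
    HasDerivAt (evalL L) (evalL (derivL L) u) u := by
  induction L with
  | nil =>
      have h : (evalL ([] : List (ℝ × ℕ))) = fun _ : ℝ => (0:ℝ) := rfl
      rw [h]
      simpa [derivL, evalL] using (hasDerivAt_const u (0:ℝ))
  | cons p M ih =>
      have h1 : HasDerivAt (fun x : ℝ => p.1 * x ^ p.2)
          (p.1 * (↑p.2 * u ^ (p.2 - 1))) u := (hasDerivAt_pow p.2 u).const_mul p.1
      have h2 := h1.add ih
      have e1 : evalL (p :: M) = fun x => p.1 * x ^ p.2 + evalL M x := by
        funext x; simp [evalL]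
      have e2 : evalL (derivL (p :: M)) u
          = p.1 * (↑p.2 * u ^ (p.2 - 1)) + evalL (derivL M) u := by
        simp [derivL, evalL]; ring
      rw [e1, e2]; exact h2

lemma differentiable_evalL (L : List (ℝ × ℕ)) : Differentiable ℝ (evalL L) :=
  fun u => (hasDerivAt_evalL L u).differentiableAt

lemma continuous_evalL (L : List (ℝ × ℕ)) : Continuous (evalL L) :=
  (differentiable_evalL L).continuous

lemma deriv_evalL (L : List (ℝ × ℕ)) : deriv (evalL L) = evalL (derivL L) := by
  funext u; exact (hasDerivAt_evalL L u).deriv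

/-- factoring out `u^e₀` when all exponents are at least `e₀`. -/
lemma evalL_shift (M : List (ℝ × ℕ)) (e₀ : ℕ) (hM : ∀ p ∈ M, e₀ ≤ p.2) (u : ℝ) :
    u ^ e₀ * evalL (M.map fun p => (p.1, p.2 - e₀)) u = evalL M u := by
  induction M with
  | nil => simp [evalL]
  | cons p M ih =>
      have hp : e₀ ≤ p.2 := hM p (by simp)
      have hrest := ih (fun x hx => hM x (by simp [hx]))
      simp only [List.map_cons, evalL_cons] at *
      rw [mul_add, hrest]
      have : u ^ e₀ * (p.1 * u ^ (p.2 - e₀)) = p.1 * (u ^ e₀ * u ^ (p.2 - e₀)) := by ring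
      have he : e₀ + (p.2 - e₀) = p.2 := by omega
      rw [this, ← pow_add, he]

lemma evalL_zero_of_pos (M : List (ℝ × ℕ)) (hM : ∀ p ∈ M, 1 ≤ p.2) :
    evalL M 0 = 0 := by
  induction M with
  | nil => simp [evalL]
  | cons p M ih =>
      have hp : 1 ≤ p.2 := hM p (by simp)
      rw [evalL_cons, ih (fun x hx => hM x (by simp [hx]))]
      rw [zero_pow (by omega)]
      ring

lemma evalL_neg (M : List (ℝ × ℕ)) (u : ℝ) :
    evalL (M.map fun p => (-p.1, p.2)) u = -evalL M u := by
  induction M with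
  | nil => simp [evalL]
  | cons p M ih => simp only [List.map_cons, evalL_cons, ih]; ring

def sgnChanges : List ℝ → ℕ
  | a :: b :: l => (if a * b < 0 then 1 else 0) + sgnChanges (b :: l)
  | _ => 0

lemma sgnChanges_cons_cons (a b : ℝ) (l : List ℝ) :
    sgnChanges (a :: b :: l) = (if a * b < 0 then 1 else 0) + sgnChanges (b :: l) := rfl

lemma sgnChanges_singleton (a : ℝ) : sgnChanges [a] = 0 := rfl

/-- sign changes only depend on the signs. -/
lemma sgnChanges_congr : ∀ (l l' : List ℝ), List.Forall₂ (fun x y => 0 < x * y) l l' →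
    sgnChanges l = sgnChanges l'
  | _, _, List.Forall₂.nil => rfl
  | _, _, List.Forall₂.cons (a := a) (b := a') h List.Forall₂.nil => rfl
  | _, _, List.Forall₂.cons (a := a) (b := a')  h
      (List.Forall₂.cons (a := b) (b := b') h2 htail) => by
    have hrec := sgnChanges_congr _ _ (List.Forall₂.cons h2 htail)
    rw [sgnChanges_cons_cons, sgnChanges_cons_cons, hrec]
    congr 1
    have key : (a * b) * (a' * b') > 0 := by nlinarith
    by_cases hab : a * b < 0
    · rw [if_pos hab, if_pos (by nlinarith)]
    · rw [if_neg hab, if_neg (by nlinarith)]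


lemma rolleS (f : ℝ → ℝ) (hf : Differentiable ℝ f) :
    ∀ (l : List ℝ), l.Chain' (· < ·) → (∀ r ∈ l, f r = 0) →
    ∀ (S : Finset ℝ), (∀ x ∈ S, x ∈ l ∧ deriv f x = 0) →
    ∃ T : Finset ℝ, T.card = (l.length - 1) + S.card ∧
      ∀ x ∈ T, deriv f x = 0 ∧ ∀ a ∈ l.head?, a ≤ x := by
  intro l
  induction l with
  | nil =>
      intro _ _ S hS
      have : S = ∅ := Finset.eq_empty_of_forall_notMem (fun x hx => by
        simpa using (hS x hx).1)
      exact ⟨∅, by simp [this], by simp⟩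
  | cons r₁ l₂ ih =>
      intro hchain hroot S hS
      match l₂, hchain with
      | [], _ =>
          refine ⟨S, by simp, fun x hx => ?_⟩
          have h := hS x hx
          have : x = r₁ := by simpa using h.1
          exact ⟨h.2, by simp [this]⟩
      | r₂ :: rest, hchain =>
          have h12 : r₁ < r₂ := (List.isChain_cons_cons.mp hchain).1
          have hchain2 : (r₂ :: rest).Chain' (· < ·) := (List.isChain_cons_cons.mp hchain).2
          have hroot2 : ∀ r ∈ r₂ :: rest, f r = 0 := fun r hr => hroot r (by simp [hr])
          -- all elements of r₂ :: rest are ≥ r₂  (sortedness)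
          have hge : ∀ x ∈ (r₂ :: rest), r₂ ≤ x := by
            intro x hx
            have hp : (r₂ :: rest).Pairwise (· < ·) :=
              List.isChain_iff_pairwise.mp hchain2
            rcases List.mem_cons.mp hx with h | h
            · exact le_of_eq h.symm
            · exact le_of_lt ((List.pairwise_cons.mp hp).1 x h)
          set S' := S.erase r₁ with hS'def
          have hS' : ∀ x ∈ S', x ∈ (r₂ :: rest) ∧ deriv f x = 0 := by
            intro x hx
            have hxS : x ∈ S := Finset.mem_of_mem_erase hx
            have hxne : x ≠ r₁ := Finset.ne_of_mem_erase hx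
            have h := hS x hxS
            refine ⟨?_, h.2⟩
            rcases List.mem_cons.mp h.1 with h' | h'
            · exact absurd h' hxne
            · exact h'
          obtain ⟨T'', hcard, hprop⟩ := ih hchain2 hroot2 S' hS'
          -- Rolle point in (r₁, r₂)
          obtain ⟨x₀, hx₀mem, hx₀⟩ := exists_deriv_eq_zero h12
            (hf.continuous.continuousOn)
            (by rw [hroot r₁ (by simp), hroot r₂ (by simp)])
          have hx₀T : x₀ ∉ T'' := fun h => by
            have := (hprop x₀ h).2 r₂ (by simp)
            exact absurd hx₀mem.2 (not_lt.mpr this)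
          have hr₁T : r₁ ∉ T'' := fun h => by
            have := (hprop r₁ h).2 r₂ (by simp)
            exact absurd h12 (not_lt.mpr this)
          by_cases hr₁S : r₁ ∈ S
          · refine ⟨insert x₀ (insert r₁ T''), ?_, ?_⟩
            · rw [Finset.card_insert_of_notMem (by
                simp only [Finset.mem_insert]
                rintro (h | h)
                · exact absurd h (ne_of_gt hx₀mem.1)
                · exact hx₀T h),
                Finset.card_insert_of_notMem hr₁T, hcard]
              have : S'.card = S.card - 1 := Finset.card_erase_of_mem hr₁S
              have hSpos : 1 ≤ S.card := Finset.card_pos.mpr ⟨r₁, hr₁S⟩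
              simp only [List.length_cons]
              omega
            · intro x hx
              simp only [Finset.mem_insert] at hx
              rcases hx with rfl | rfl | hx
              · exact ⟨hx₀, by simp; exact le_of_lt hx₀mem.1⟩
              · exact ⟨(hS x hr₁S).2, by simp⟩
              · refine ⟨(hprop x hx).1, ?_⟩
                have := (hprop x hx).2 r₂ (by simp)
                simp only [List.head?_cons, Option.mem_some_iff]
                rintro a rfl
                linarith
          · have hSS' : S' = S := Finset.erase_eq_of_notMem hr₁S
            refine ⟨insert x₀ T'', ?_, ?_⟩
            · rw [Finset.card_insert_of_notMem hx₀T, hcard, hSS']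
              simp only [List.length_cons]
              omega
            · intro x hx
              simp only [Finset.mem_insert] at hx
              rcases hx with rfl | hx
              · exact ⟨hx₀, by simp; exact le_of_lt hx₀mem.1⟩
              · refine ⟨(hprop x hx).1, ?_⟩
                have := (hprop x hx).2 r₂ (by simp)
                simp only [List.head?_cons, Option.mem_some_iff]
                rintro a rfl
                linarith


lemma extra_root_pos (c₀ c₁ : ℝ) (d₁ : ℕ) (Mt : List (ℝ × ℕ))
    (hc₀ : 0 < c₀) (hc₁ : 0 < c₁) (hd₁ : 1 ≤ d₁) (hMt : ∀ p ∈ Mt, d₁ < p.2)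
    (r₁ : ℝ) (hr₁ : 0 < r₁) (hroot : evalL ((c₀,0)::(c₁,d₁)::Mt) r₁ = 0) :
    ∃ x : ℝ, 0 < x ∧ x < r₁ ∧ deriv (evalL ((c₀,0)::(c₁,d₁)::Mt)) x = 0 := by
  set G : List (ℝ × ℕ) := (c₀,0)::(c₁,d₁)::Mt with hG
  set D : List (ℝ × ℕ) := (c₁ * d₁, d₁ - 1) :: derivL Mt with hD
  have hg'eq : ∀ u, evalL (derivL G) u = evalL D u := by
    intro u
    simp [hG, hD, derivL, evalL_cons]
  set D' : List (ℝ × ℕ) := D.map (fun p => (p.1, p.2 - (d₁ - 1))) with hD'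
  have hshift : ∀ u : ℝ, u ^ (d₁ - 1) * evalL D' u = evalL D u := by
    intro u
    refine evalL_shift D (d₁ - 1) ?_ u
    intro p hp
    rcases List.mem_cons.mp hp with rfl | hp
    · simp
    · simp only [hD, derivL, List.mem_map] at hp
      obtain ⟨x, hx, rfl⟩ := hp
      have := hMt x hx
      simp; omega
  have hD'0 : evalL D' 0 = c₁ * d₁ := by
    have htail : evalL ((derivL Mt).map (fun p => (p.1, p.2 - (d₁ - 1)))) 0 = 0 := by
      apply evalL_zero_of_pos
      intro p hp
      simp only [derivL, List.map_map, List.mem_map] at hp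
      obtain ⟨x, hx, rfl⟩ := hp
      have := hMt x hx
      simp; omega
    simp only [hD', hD, List.map_cons, evalL_cons, htail]
    norm_num
  have hcd : (0:ℝ) < c₁ * d₁ := by
    have h1 : (1:ℝ) ≤ (d₁ : ℝ) := by exact_mod_cast hd₁
    nlinarith
  have hev₂ : ∀ᶠ u in nhds (0:ℝ), 0 < evalL D' u :=
    (continuous_evalL D').continuousAt.eventually (eventually_gt_nhds (by rw [hD'0]; exact hcd))
  have hG0 : evalL G 0 = c₀ := by
    have htail : evalL ((c₁,d₁)::Mt) 0 = 0 := by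
      apply evalL_zero_of_pos
      intro p hp
      rcases List.mem_cons.mp hp with rfl | hp
      · simpa using hd₁
      · have := hMt p hp; omega
    rw [hG, evalL_cons, htail]
    norm_num
  have hev₁ : ∀ᶠ u in nhds (0:ℝ), 0 < evalL G u :=
    (continuous_evalL G).continuousAt.eventually (eventually_gt_nhds (by rw [hG0]; exact hc₀))
  obtain ⟨δ₁, hδ₁, hball₁⟩ := Metric.eventually_nhds_iff_ball.mp hev₁
  obtain ⟨δ₂, hδ₂, hball₂⟩ := Metric.eventually_nhds_iff_ball.mp hev₂
  -- choose points
  set t : ℝ := min (min δ₁ δ₂) r₁ / 2 with ht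
  have hm1 : min (min δ₁ δ₂) r₁ ≤ δ₁ := le_trans (min_le_left _ _) (min_le_left _ _)
  have hm2 : min (min δ₁ δ₂) r₁ ≤ δ₂ := le_trans (min_le_left _ _) (min_le_right _ _)
  have hm3 : min (min δ₁ δ₂) r₁ ≤ r₁ := min_le_right _ _
  have ht0 : 0 < t := by
    have h1 : 0 < min (min δ₁ δ₂) r₁ := lt_min (lt_min hδ₁ hδ₂) hr₁
    positivity
  have htδ₁ : t < δ₁ := by rw [ht]; linarith
  have htr₁ : t < r₁ := by rw [ht]; linarith
  set t'' : ℝ := t / 2 with ht''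
  have ht''0 : 0 < t'' := by positivity
  have ht''δ₂ : t'' < δ₂ := by rw [ht'', ht]; linarith
  -- g positive at t
  have hgt : 0 < evalL G t := hball₁ t (by
    simp only [Metric.mem_ball, Real.dist_eq, sub_zero, abs_of_pos ht0]; exact htδ₁)
  -- deriv g positive at t''
  have hg't'' : 0 < evalL (derivL G) t'' := by
    rw [hg'eq, ← hshift]
    have h1 : 0 < evalL D' t'' := hball₂ t'' (by
      simp only [Metric.mem_ball, Real.dist_eq, sub_zero, abs_of_pos ht''0]; exact ht''δ₂)
    have h2 : 0 < t'' ^ (d₁ - 1) := pow_pos ht''0 _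
    exact mul_pos h2 h1
  -- MVT on [t, r₁]
  obtain ⟨c, hcmem, hc⟩ := exists_deriv_eq_slope (evalL G) htr₁
    (continuous_evalL G).continuousOn ((differentiable_evalL G).differentiableOn)
  have hslope : deriv (evalL G) c < 0 := by
    rw [hc, hroot]
    have : 0 < evalL G t := hgt
    have hd : 0 < r₁ - t := by linarith
    apply div_neg_of_neg_of_pos _ hd
    linarith
  -- IVT for deriv g on [t'', c]
  have ht''c : t'' ≤ c := by
    have := hcmem.1
    rw [ht'']; linarith
  have hcont : ContinuousOn (deriv (evalL G)) (Icc t'' c) := by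
    rw [deriv_evalL]; exact (continuous_evalL _).continuousOn
  have h0mem : (0:ℝ) ∈ Ioo (deriv (evalL G) c) (deriv (evalL G) t'') := by
    constructor
    · exact hslope
    · rw [deriv_evalL]; exact hg't''
  obtain ⟨x, hxmem, hx⟩ := intermediate_value_Ioo' ht''c hcont h0mem
  exact ⟨x, lt_trans ht''0 hxmem.1, lt_trans hxmem.2 hcmem.2, hx⟩

/-- the extra root, both sign cases. -/
lemma extra_root (c₀ c₁ : ℝ) (d₁ : ℕ) (Mt : List (ℝ × ℕ))
    (hcc : 0 < c₀ * c₁) (hd₁ : 1 ≤ d₁) (hMt : ∀ p ∈ Mt, d₁ < p.2)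
    (r₁ : ℝ) (hr₁ : 0 < r₁) (hroot : evalL ((c₀,0)::(c₁,d₁)::Mt) r₁ = 0) :
    ∃ x : ℝ, 0 < x ∧ x < r₁ ∧ deriv (evalL ((c₀,0)::(c₁,d₁)::Mt)) x = 0 := by
  rcases lt_trichotomy c₀ 0 with hc₀ | hc₀ | hc₀
  · -- negate
    have hc₁ : c₁ < 0 := by nlinarith
    set Mt' : List (ℝ × ℕ) := Mt.map (fun p => (-p.1, p.2)) with hMt'
    have hMt'exp : ∀ p ∈ Mt', d₁ < p.2 := by
      intro p hp
      simp only [hMt', List.mem_map] at hp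
      obtain ⟨x, hx, rfl⟩ := hp
      exact hMt x hx
    have hkey : ∀ u : ℝ, evalL ((-c₀,0)::(-c₁,d₁)::Mt') u
        = - evalL ((c₀,0)::(c₁,d₁)::Mt) u := by
      intro u
      have := evalL_neg ((c₀,0)::(c₁,d₁)::Mt) u
      simpa [hMt'] using this
    obtain ⟨x, hx0, hxr, hx⟩ := extra_root_pos (-c₀) (-c₁) d₁ Mt'
      (by linarith) (by linarith) hd₁ hMt'exp r₁ hr₁ (by rw [hkey, hroot]; ring)
    refine ⟨x, hx0, hxr, ?_⟩
    have hfun : evalL ((-c₀,0)::(-c₁,d₁)::Mt') = fun u => - evalL ((c₀,0)::(c₁,d₁)::Mt) u :=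
      funext hkey
    rw [hfun] at hx
    rw [deriv.fun_neg] at hx
    linarith [hx]
  · exfalso; rw [hc₀, zero_mul] at hcc; exact lt_irrefl 0 hcc
  · have hc₁ : 0 < c₁ := by nlinarith
    exact extra_root_pos c₀ c₁ d₁ Mt hc₀ hc₁ hd₁ hMt r₁ hr₁ hroot


lemma forall₂_map_same {α : Type*} (f g : α → ℝ) (l : List α)
    (h : ∀ x ∈ l, 0 < f x * g x) :
    List.Forall₂ (fun x y => 0 < x * y) (l.map f) (l.map g) := by
  induction l with
  | nil => simp
  | cons a t ih =>
      simp only [List.map_cons]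
      exact List.Forall₂.cons (h a (by simp)) (ih (fun x hx => h x (by simp [hx])))


lemma chain'_sub (k : ℕ) : ∀ (es : List ℕ), es.Chain' (· < ·) → (∀ e ∈ es, k < e) →
    List.Chain' (· < ·) (es.map fun e => e - k - 1)
  | [], _, _ => by simp [List.Chain']
  | [a], _, _ => by simp [List.Chain']
  | a :: b :: t, h, hm => by
      show List.IsChain _ _; rw [List.map_cons, List.map_cons, List.isChain_cons_cons]
      obtain ⟨hab, ht⟩ := List.isChain_cons_cons.mp h
      refine ⟨by have := hm a (by simp); omega, ?_⟩
      have := chain'_sub k (b :: t) ht (fun e he => hm e (by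
        simp only [List.mem_cons] at he ⊢; tauto))
      simpa [List.Chain'] using this

/-- Descartes-type bound: the number of distinct positive roots plus the number of
those roots where the derivative also vanishes is at most the number of sign changes. -/
lemma descartes_main (n : ℕ) : ∀ (L : List (ℝ × ℕ)), L.length ≤ n → L ≠ [] →
    (∀ p ∈ L, p.1 ≠ 0) → (L.map Prod.snd).Chain' (· < ·) →
    ∀ (l : List ℝ), l.Chain' (· < ·) → (∀ r ∈ l, 0 < r) → (∀ r ∈ l, evalL L r = 0) →
    ∀ (S : Finset ℝ), (∀ x ∈ S, x ∈ l ∧ deriv (evalL L) x = 0) →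
    l.length + S.card ≤ sgnChanges (L.map Prod.fst) := by
  induction n with
  | zero =>
      intro L hlen hne _ _ _ _ _ _ _ _
      exact absurd (List.eq_nil_of_length_eq_zero (Nat.le_zero.mp hlen)) hne
  | succ n ih =>
      intro L hlen hne hc he l hl hlpos hlroot S hS
      rcases L with _ | ⟨⟨c₀, e₀⟩, L'⟩
      · exact absurd rfl hne
      rcases L' with _ | ⟨⟨c₁, e₁⟩, M⟩
      · -- base case: single monomial, no positive roots
        have hl0 : l = [] := by
          rcases l with _ | ⟨r, l₂⟩
          · rfl
          · exfalso
            have hr := hlroot r (by simp)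
            have hrpos := hlpos r (by simp)
            rw [evalL_cons] at hr
            have hc₀ : c₀ ≠ 0 := by have := hc (c₀, e₀) (by simp); simpa using this
            have hne' : c₀ * r ^ e₀ ≠ 0 := mul_ne_zero hc₀ (pow_ne_zero _ (ne_of_gt hrpos))
            apply hne'
            have h0 : evalL ([] : List (ℝ × ℕ)) r = 0 := rfl
            rw [h0] at hr
            simpa using hr
        subst hl0
        have hS0 : S = ∅ := Finset.eq_empty_of_forall_notMem (fun x hx => by
          simpa using (hS x hx).1)
        subst hS0
        simp [sgnChanges]
      · -- inductive step
        -- exponent facts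
        have hpw : ((e₀ : ℕ) :: e₁ :: M.map Prod.snd).Pairwise (· < ·) := by
          have := List.isChain_iff_pairwise.mp he
          simpa using this
        have he01 : e₀ < e₁ := by
          have := (List.pairwise_cons.mp hpw).1
          exact this e₁ (by simp)
        have he₀M : ∀ p ∈ M, e₀ < p.2 := by
          intro p hp
          exact (List.pairwise_cons.mp hpw).1 p.2
            (List.mem_cons_of_mem _ (List.mem_map.mpr ⟨p, hp, rfl⟩))
        have he₁M : ∀ p ∈ M, e₁ < p.2 := by
          intro p hp
          have h := (List.pairwise_cons.mp hpw).2
          exact (List.pairwise_cons.mp h).1 p.2 (List.mem_map.mpr ⟨p, hp, rfl⟩)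
        have hchainM : (e₁ :: M.map Prod.snd).Chain' (· < ·) := by
          have := List.isChain_cons.mp he
          simpa [List.Chain'] using this.2
        -- the shifted list G and its derivative list D
        set Mt' : List (ℝ × ℕ) := M.map (fun p => (p.1, p.2 - e₀)) with hMt'def
        set G : List (ℝ × ℕ) := (c₀, 0) :: (c₁, e₁ - e₀) :: Mt' with hGdef
        set D : List (ℝ × ℕ) := derivL ((c₁, e₁ - e₀) :: Mt') with hDdef
        have hfact : ∀ u : ℝ, evalL ((c₀,e₀)::(c₁,e₁)::M) u = u ^ e₀ * evalL G u := by
          intro u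
          have h := evalL_shift ((c₀,e₀)::(c₁,e₁)::M) e₀ ?_ u
          · rw [← h]
            congr 2
            simp [hGdef, hMt'def, Nat.sub_self]
          · intro p hp
            rcases List.mem_cons.mp hp with rfl | hp
            · simp
            rcases List.mem_cons.mp hp with rfl | hp
            · simp; omega
            · exact le_of_lt (he₀M p hp)
        have hGderivAt : ∀ u : ℝ, HasDerivAt (evalL G) (evalL D u) u := by
          intro u
          have h := hasDerivAt_evalL G u
          have heq : evalL (derivL G) u = evalL D u := by
            simp [hGdef, hDdef, derivL, evalL_cons]
          rwa [heq] at h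
        have hGderiv : deriv (evalL G) = fun u => evalL D u := by
          funext u; exact (hGderivAt u).deriv
        have hGroot : ∀ r ∈ l, evalL G r = 0 := by
          intro r hr
          have h := hlroot r hr
          rw [hfact r] at h
          have hrpos := hlpos r hr
          have : r ^ e₀ ≠ 0 := pow_ne_zero _ (ne_of_gt hrpos)
          rcases mul_eq_zero.mp h with h | h
          · exact absurd h this
          · exact h
        have hSD : ∀ x ∈ S, x ∈ l ∧ deriv (evalL G) x = 0 := by
          intro x hx
          obtain ⟨hxl, hxd⟩ := hS x hx
          refine ⟨hxl, ?_⟩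
          have hx0 : 0 < x := hlpos x hxl
          have hGx : evalL G x = 0 := hGroot x hxl
          have hfun : evalL ((c₀,e₀)::(c₁,e₁)::M) = fun u => u ^ e₀ * evalL G u :=
            funext hfact
          have hL : HasDerivAt (evalL ((c₀,e₀)::(c₁,e₁)::M))
              ((↑e₀ * x ^ (e₀ - 1)) * evalL G x + x ^ e₀ * evalL D x) x := by
            rw [hfun]
            exact (hasDerivAt_pow e₀ x).mul (hGderivAt x)
          have h0 : (↑e₀ * x ^ (e₀ - 1)) * evalL G x + x ^ e₀ * evalL D x = 0 := by
            rw [← hL.deriv]; exact hxd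
          rw [hGx, mul_zero, zero_add] at h0
          have hxe : x ^ e₀ ≠ 0 := pow_ne_zero _ (ne_of_gt hx0)
          have hD0 : evalL D x = 0 := by
            rcases mul_eq_zero.mp h0 with h | h
            · exact absurd h hxe
            · exact h
          rw [hGderiv]; exact hD0
        -- properties of D for the IH
        have hDlen : D.length ≤ n := by
          simp only [hDdef, derivL, List.length_map, List.length_cons, hMt'def]
          simp only [List.length_cons, List.length_map] at hlen ⊢
          omega
        have hDne : D ≠ [] := by simp [hDdef, derivL]
        have hDc : ∀ p ∈ D, p.1 ≠ 0 := by
          intro p hp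
          rw [hDdef] at hp
          simp only [derivL, List.mem_map] at hp
          obtain ⟨y, hy, rfl⟩ := hp
          dsimp only
          rcases List.mem_cons.mp hy with rfl | hy
          · have hc₁ : c₁ ≠ 0 := by have := hc (c₁, e₁) (by simp); simpa using this
            have h1 : (0:ℝ) < ((e₁ - e₀ : ℕ) : ℝ) := by
              have h2 : 0 < e₁ - e₀ := by omega
              exact_mod_cast h2
            exact mul_ne_zero hc₁ (ne_of_gt h1)
          · rw [hMt'def] at hy
            obtain ⟨x, hx, rfl⟩ := List.mem_map.mp hy
            have hcx : x.1 ≠ 0 := hc x (by simp [hx])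
            have hxe : e₀ < x.2 := he₀M x hx
            have h1 : (0:ℝ) < ((x.2 - e₀ : ℕ) : ℝ) := by
              have h2 : 0 < x.2 - e₀ := by omega
              exact_mod_cast h2
            exact mul_ne_zero hcx (ne_of_gt h1)
        have hDe : (D.map Prod.snd).Chain' (· < ·) := by
          have hmap : D.map Prod.snd
              = (e₁ :: M.map Prod.snd).map (fun e => e - e₀ - 1) := by
            simp [hDdef, derivL, hMt'def, List.map_map, Function.comp]
          rw [hmap]
          apply chain'_sub
          · exact hchainM
          · intro e hee
            rcases List.mem_cons.mp hee with rfl | hee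
            · exact he01
            · simp only [List.mem_map] at hee
              obtain ⟨x, hx, rfl⟩ := hee
              exact he₀M x hx
        -- sign-change bookkeeping
        have hsgn : sgnChanges (D.map Prod.fst)
            = sgnChanges (((c₁,e₁)::M).map Prod.fst) := by
          apply sgnChanges_congr
          have hmap : D.map Prod.fst
              = ((c₁,e₁)::M).map (fun p => p.1 * ((p.2 - e₀ : ℕ) : ℝ)) := by
            simp [hDdef, derivL, hMt'def, List.map_map, Function.comp]
          rw [hmap]
          apply forall₂_map_same
          intro x hx
          have hx1 : x.1 ≠ 0 := hc x (by
            rcases List.mem_cons.mp hx with rfl | hx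
            · simp
            · simp [hx])
          have hx2 : 1 ≤ x.2 - e₀ := by
            rcases List.mem_cons.mp hx with rfl | hx
            · omega
            · have := he₀M x hx; omega
          have hx2' : (1:ℝ) ≤ ((x.2 - e₀ : ℕ) : ℝ) := by exact_mod_cast hx2
          have hsq : 0 < x.1 * x.1 := mul_self_pos.mpr hx1
          nlinarith
        have htop : sgnChanges (((c₀,e₀)::(c₁,e₁)::M).map Prod.fst)
            = (if c₀ * c₁ < 0 then 1 else 0)
              + sgnChanges (((c₁,e₁)::M).map Prod.fst) := by
          simp only [List.map_cons, sgnChanges_cons_cons]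
        -- split on whether the root list is empty
        rcases l with _ | ⟨r₁, l₂⟩
        · have hS0 : S = ∅ := Finset.eq_empty_of_forall_notMem (fun x hx => by
            simpa using (hS x hx).1)
          subst hS0
          simp
        · obtain ⟨T, hTcard, hTprop⟩ := rolleS (evalL G) (differentiable_evalL G)
            (r₁ :: l₂) hl hGroot S hSD
          have hr₁pos : 0 < r₁ := hlpos r₁ (by simp)
          have hTbound : ∀ x ∈ T, r₁ ≤ x := fun x hx => (hTprop x hx).2 r₁ (by simp)
          have hTroot : ∀ x ∈ T, evalL D x = 0 := by
            intro x hx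
            have h := (hTprop x hx).1
            rw [hGderiv] at h; exact h
          by_cases hsign : 0 < c₀ * c₁
          · -- no sign change in front: find an extra root of the derivative below r₁
            obtain ⟨x₀, hx₀pos, hx₀lt, hx₀d⟩ := extra_root c₀ c₁ (e₁ - e₀) Mt'
              hsign (by omega)
              (fun p hp => by
                simp only [hMt'def, List.mem_map] at hp
                obtain ⟨x, hx, rfl⟩ := hp
                have h1 := he₁M x hx
                have h2 := he₀M x hx
                simp only
                omega)
              r₁ hr₁pos (by rw [← hGdef]; exact hGroot r₁ (by simp))
            have hx₀d' : evalL D x₀ = 0 := by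
              have h : deriv (evalL G) x₀ = 0 := by rw [hGdef]; exact hx₀d
              rw [hGderiv] at h; exact h
            have hx₀T : x₀ ∉ T := fun h => absurd (hTbound x₀ h) (not_le.mpr hx₀lt)
            set T₂ : Finset ℝ := insert x₀ T with hT₂def
            have hT₂card : T₂.card = (l₂.length + 1) + S.card := by
              rw [hT₂def, Finset.card_insert_of_notMem hx₀T, hTcard]
              simp only [List.length_cons]
              omega
            have hT₂root : ∀ x ∈ T₂, evalL D x = 0 := by
              intro x hx
              rcases Finset.mem_insert.mp hx with rfl | hx
              · exact hx₀d'
              · exact hTroot x hx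
            have hT₂pos : ∀ x ∈ T₂, 0 < x := by
              intro x hx
              rcases Finset.mem_insert.mp hx with rfl | hx
              · exact hx₀pos
              · exact lt_of_lt_of_le hr₁pos (hTbound x hx)
            set lT := T₂.sort (· ≤ ·) with hlTdef
            have hlTchain : lT.Chain' (· < ·) :=
              List.isChain_iff_pairwise.mpr (Finset.sortedLT_sort T₂).pairwise
            have hIH := ih D hDlen hDne hDc hDe lT hlTchain
              (fun r hr => hT₂pos r (by rwa [hlTdef, Finset.mem_sort] at hr))
              (fun r hr => hT₂root r (by rwa [hlTdef, Finset.mem_sort] at hr))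
              ∅ (by simp)
            rw [hlTdef] at hIH
            rw [Finset.length_sort] at hIH
            rw [htop, if_neg (by intro h; linarith)]
            simp only [Finset.card_empty, add_zero] at hIH
            rw [hsgn] at hIH
            simp only [List.length_cons]
            omega
          · -- sign change in front
            set lT := T.sort (· ≤ ·) with hlTdef
            have hlTchain : lT.Chain' (· < ·) :=
              List.isChain_iff_pairwise.mpr (Finset.sortedLT_sort T).pairwise
            have hIH := ih D hDlen hDne hDc hDe lT hlTchain
              (fun r hr => lt_of_lt_of_le hr₁pos
                (hTbound r (by rwa [hlTdef, Finset.mem_sort] at hr)))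
              (fun r hr => hTroot r (by rwa [hlTdef, Finset.mem_sort] at hr))
              ∅ (by simp)
            rw [hlTdef] at hIH
            rw [Finset.length_sort] at hIH
            have hc₀ : c₀ ≠ 0 := hc (c₀,e₀) (by simp)
            have hc₁ : c₁ ≠ 0 := hc (c₁,e₁) (by simp)
            have hne0 : c₀ * c₁ ≠ 0 := mul_ne_zero hc₀ hc₁
            have hlt : c₀ * c₁ < 0 := by
              rcases lt_trichotomy (c₀ * c₁) 0 with h | h | h
              · exact h
              · exact absurd h hne0
              · exact absurd h hsign
            rw [htop, if_pos hlt]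
            simp only [Finset.card_empty, add_zero] at hIH
            rw [hsgn] at hIH
            simp only [List.length_cons] at hTcard ⊢
            omega


set_option maxHeartbeats 1000000 in
lemma bound_roots (m k : ℕ) (aA az bA bz E F : ℝ)
    (haA : 0 < aA) (haz : 0 < az) (hbA : 0 < bA) (hbz : 0 < bz) (hF : F < 0)
    (g : ℝ → ℝ)
    (hg : g = evalL [(F,0),(E,1),(aA, m+2),(-az, m+3),(bA, m+k+4),(-bz, m+k+5)]) :
    ∀ l : List ℝ, l.Chain' (· < ·) → (∀ r ∈ l, 0 < r) → (∀ r ∈ l, g r = 0) →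
    ∀ S : Finset ℝ, (∀ x ∈ S, x ∈ l ∧ deriv g x = 0) → l.length + S.card ≤ 4 := by
  intro l hl hlp hlr S hS
  rcases eq_or_ne E 0 with hE0 | hEne
  · have hfun5 : g = evalL [(F,0),(aA, m+2),(-az, m+3),(bA, m+k+4),(-bz, m+k+5)] := by
      rw [hg]
      funext u
      simp only [evalL_cons, evalL_nil, hE0]
      ring
    have hmap : ([(F,0),(aA, m+2),(-az, m+3),(bA, m+k+4),(-bz, m+k+5)]
        : List (ℝ × ℕ)).map Prod.fst = [F, aA, -az, bA, -bz] := by simp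
    have h := descartes_main 5 [(F,0),(aA, m+2),(-az, m+3),(bA, m+k+4),(-bz, m+k+5)]
      (by simp) (by simp)
      (by
        intro pp hpp
        simp only [List.mem_cons, List.not_mem_nil, or_false] at hpp
        rcases hpp with rfl | rfl | rfl | rfl | rfl
        · exact ne_of_lt hF
        · exact ne_of_gt haA
        · exact ne_of_lt (by dsimp only; linarith)
        · exact ne_of_gt hbA
        · exact ne_of_lt (by dsimp only; linarith))
      (by simp [List.Chain', List.isChain_cons_cons])
      l hl hlp (fun r hr => by rw [← hfun5]; exact hlr r hr)
      S (fun x hx => ⟨(hS x hx).1, by rw [← hfun5]; exact (hS x hx).2⟩)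
    rw [hmap] at h
    have hsgn : sgnChanges [F, aA, -az, bA, -bz] = 4 := by
      rw [sgnChanges_cons_cons, sgnChanges_cons_cons, sgnChanges_cons_cons,
        sgnChanges_cons_cons, sgnChanges_singleton]
      rw [if_pos (by nlinarith), if_pos (by nlinarith), if_pos (by nlinarith),
        if_pos (by nlinarith)]
    rw [hsgn] at h
    exact h
  · have hmap : ([(F,0),(E,1),(aA, m+2),(-az, m+3),(bA, m+k+4),(-bz, m+k+5)]
        : List (ℝ × ℕ)).map Prod.fst = [F, E, aA, -az, bA, -bz] := by simp
    have h := descartes_main 6 [(F,0),(E,1),(aA, m+2),(-az, m+3),(bA, m+k+4),(-bz, m+k+5)]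
      (by simp) (by simp)
      (by
        intro pp hpp
        simp only [List.mem_cons, List.not_mem_nil, or_false] at hpp
        rcases hpp with rfl | rfl | rfl | rfl | rfl | rfl
        · exact ne_of_lt hF
        · exact hEne
        · exact ne_of_gt haA
        · exact ne_of_lt (by dsimp only; linarith)
        · exact ne_of_gt hbA
        · exact ne_of_lt (by dsimp only; linarith))
      (by simp [List.Chain', List.isChain_cons_cons])
      l hl hlp (fun r hr => by rw [← hg]; exact hlr r hr)
      S (fun x hx => ⟨(hS x hx).1, by rw [← hg]; exact (hS x hx).2⟩)
    rw [hmap] at h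
    have hsgn : sgnChanges [F, E, aA, -az, bA, -bz] = 4 := by
      rw [sgnChanges_cons_cons, sgnChanges_cons_cons, sgnChanges_cons_cons,
        sgnChanges_cons_cons, sgnChanges_cons_cons, sgnChanges_singleton]
      rcases hEne.lt_or_gt with hE | hE
      · rw [if_neg (by nlinarith), if_pos (by nlinarith), if_pos (by nlinarith),
          if_pos (by nlinarith), if_pos (by nlinarith)]
      · rw [if_pos (by nlinarith), if_neg (by nlinarith), if_pos (by nlinarith),
          if_pos (by nlinarith), if_pos (by nlinarith)]
    rw [hsgn] at h
    exact h

set_option maxHeartbeats 1000000 in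
lemma bound_deriv (m k : ℕ) (aA az bA bz E : ℝ)
    (haA : 0 < aA) (haz : 0 < az) (hbA : 0 < bA) (hbz : 0 < bz)
    (g' : ℝ → ℝ)
    (hg' : g' = evalL [(E,0),(aA, m+1),(-az, m+2),(bA, m+k+3),(-bz, m+k+4)]) :
    ∀ l : List ℝ, l.Chain' (· < ·) → (∀ r ∈ l, 0 < r) → (∀ r ∈ l, g' r = 0) →
    ∀ S : Finset ℝ, (∀ x ∈ S, x ∈ l ∧ deriv g' x = 0) →
    (l.length + S.card ≤ 3 ∨ (E < 0 ∧ l.length + S.card ≤ 4)) := by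
  intro l hl hlp hlr S hS
  rcases lt_trichotomy E 0 with hE | hE0 | hE
  · right
    refine ⟨hE, ?_⟩
    have hmap : ([(E,0),(aA, m+1),(-az, m+2),(bA, m+k+3),(-bz, m+k+4)]
        : List (ℝ × ℕ)).map Prod.fst = [E, aA, -az, bA, -bz] := by simp
    have h := descartes_main 5 [(E,0),(aA, m+1),(-az, m+2),(bA, m+k+3),(-bz, m+k+4)]
      (by simp) (by simp)
      (by
        intro pp hpp
        simp only [List.mem_cons, List.not_mem_nil, or_false] at hpp
        rcases hpp with rfl | rfl | rfl | rfl | rfl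
        · exact ne_of_lt hE
        · exact ne_of_gt haA
        · exact ne_of_lt (by dsimp only; linarith)
        · exact ne_of_gt hbA
        · exact ne_of_lt (by dsimp only; linarith))
      (by simp [List.Chain', List.isChain_cons_cons])
      l hl hlp (fun r hr => by rw [← hg']; exact hlr r hr)
      S (fun x hx => ⟨(hS x hx).1, by rw [← hg']; exact (hS x hx).2⟩)
    rw [hmap] at h
    have hsgn : sgnChanges [E, aA, -az, bA, -bz] = 4 := by
      rw [sgnChanges_cons_cons, sgnChanges_cons_cons, sgnChanges_cons_cons,
        sgnChanges_cons_cons, sgnChanges_singleton]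
      rw [if_pos (by nlinarith), if_pos (by nlinarith), if_pos (by nlinarith),
        if_pos (by nlinarith)]
    rw [hsgn] at h
    exact h
  · left
    have hfun4 : g' = evalL [(aA, m+1),(-az, m+2),(bA, m+k+3),(-bz, m+k+4)] := by
      rw [hg']
      funext u
      simp only [evalL_cons, evalL_nil, hE0]
      ring
    have hmap : ([(aA, m+1),(-az, m+2),(bA, m+k+3),(-bz, m+k+4)]
        : List (ℝ × ℕ)).map Prod.fst = [aA, -az, bA, -bz] := by simp
    have h := descartes_main 4 [(aA, m+1),(-az, m+2),(bA, m+k+3),(-bz, m+k+4)]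
      (by simp) (by simp)
      (by
        intro pp hpp
        simp only [List.mem_cons, List.not_mem_nil, or_false] at hpp
        rcases hpp with rfl | rfl | rfl | rfl
        · exact ne_of_gt haA
        · exact ne_of_lt (by dsimp only; linarith)
        · exact ne_of_gt hbA
        · exact ne_of_lt (by dsimp only; linarith))
      (by simp [List.Chain', List.isChain_cons_cons])
      l hl hlp (fun r hr => by rw [← hfun4]; exact hlr r hr)
      S (fun x hx => ⟨(hS x hx).1, by rw [← hfun4]; exact (hS x hx).2⟩)
    rw [hmap] at h
    have hsgn : sgnChanges [aA, -az, bA, -bz] = 3 := by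
      rw [sgnChanges_cons_cons, sgnChanges_cons_cons, sgnChanges_cons_cons,
        sgnChanges_singleton]
      rw [if_pos (by nlinarith), if_pos (by nlinarith), if_pos (by nlinarith)]
    rw [hsgn] at h
    exact h
  · left
    have hmap : ([(E,0),(aA, m+1),(-az, m+2),(bA, m+k+3),(-bz, m+k+4)]
        : List (ℝ × ℕ)).map Prod.fst = [E, aA, -az, bA, -bz] := by simp
    have h := descartes_main 5 [(E,0),(aA, m+1),(-az, m+2),(bA, m+k+3),(-bz, m+k+4)]
      (by simp) (by simp)
      (by
        intro pp hpp
        simp only [List.mem_cons, List.not_mem_nil, or_false] at hpp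
        rcases hpp with rfl | rfl | rfl | rfl | rfl
        · exact ne_of_gt hE
        · exact ne_of_gt haA
        · exact ne_of_lt (by dsimp only; linarith)
        · exact ne_of_gt hbA
        · exact ne_of_lt (by dsimp only; linarith))
      (by simp [List.Chain', List.isChain_cons_cons])
      l hl hlp (fun r hr => by rw [← hg']; exact hlr r hr)
      S (fun x hx => ⟨(hS x hx).1, by rw [← hg']; exact (hS x hx).2⟩)
    rw [hmap] at h
    have hsgn : sgnChanges [E, aA, -az, bA, -bz] = 3 := by
      rw [sgnChanges_cons_cons, sgnChanges_cons_cons, sgnChanges_cons_cons,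
        sgnChanges_cons_cons, sgnChanges_singleton]
      rw [if_neg (by nlinarith), if_pos (by nlinarith), if_pos (by nlinarith),
        if_pos (by nlinarith)]
    rw [hsgn] at h
    exact h

end
end DescH2

open DescH2

set_option maxHeartbeats 1600000 in
theorem h2_unique_zero
    (s p : ℕ) (hs : 3 ≤ s) (hp : s + 2 ≤ p)
    (lam : ℝ) (hlam0 : 0 < lam) (hlam1 : lam < 1)
    (xi' : ℝ → ℝ)
    (hxi' : ∀ x : ℝ, xi' x = (1 - lam) * s * x ^ (s - 1) + lam * p * x ^ (p - 1))
    (q z₁ z₂ : ℝ) (hq : 0 < q) (hq1 : q < 1) (hz₂ : 0 < z₂)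
    (hz₁ : 1 + z₁ + z₂ = q * (xi' 1 - xi' q) / (xi' q * (1 - q)))
    (h₂ : ℝ → ℝ)
    (hh₂ : ∀ u : ℝ, h₂ u =
      (xi' u - xi' q) * (1 + z₂ - q - u * z₂) - (u - q) * (xi' 1 - xi' q))
    (h20 : h₂ 0 < 0)
    (h2q : h₂ q = 0)
    (h2q' : deriv h₂ q ≤ 0)
    (h21 : h₂ 1 = 0)
    (hmid : ∃ q' : ℝ, q' ∈ Ioo q 1 ∧ h₂ q' = 0) :
    (∃! u : ℝ, u ∈ Ioo q 1 ∧ h₂ u = 0) ∧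
    ∃ δ : ℝ, 0 < δ ∧ ∀ u : ℝ, u ∈ Ioo q (q + δ) → h₂ u < 0 := by
  obtain ⟨m, rfl⟩ : ∃ m, s = m + 3 := ⟨s - 3, by omega⟩
  obtain ⟨k, rfl⟩ : ∃ k, p = m + k + 5 := ⟨p - m - 5, by omega⟩
  set a : ℝ := (1 - lam) * ((m : ℝ) + 3) with hadef
  set b : ℝ := lam * ((m : ℝ) + (k : ℝ) + 5) with hbdef
  have hxi : ∀ x : ℝ, xi' x = a * x ^ (m + 2) + b * x ^ (m + k + 4) := by
    intro x
    rw [hxi']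
    have e1 : m + 3 - 1 = m + 2 := by omega
    have e2 : m + k + 5 - 1 = m + k + 4 := by omega
    rw [e1, e2, hadef, hbdef]
    push_cast
    ring
  have ha : 0 < a := by
    rw [hadef]
    have : (0:ℝ) < (m:ℝ) + 3 := by positivity
    nlinarith
  have hb : 0 < b := by
    rw [hbdef]
    have : (0:ℝ) < (m:ℝ) + (k:ℝ) + 5 := by positivity
    nlinarith
  set c : ℝ := xi' q with hcdef
  set A : ℝ := 1 + z₂ - q with hAdef
  set B : ℝ := xi' 1 - c with hBdef
  set E : ℝ := c * z₂ - B with hEdef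
  set F : ℝ := q * B - c * A with hFdef
  have hc0 : 0 < c := by
    rw [hcdef, hxi q]
    positivity
  have hA : 0 < A := by rw [hAdef]; linarith
  have hB : 0 < B := by
    rw [hBdef, hcdef, hxi 1, hxi q]
    have h1 : q ^ (m + 2) < 1 := pow_lt_one₀ (le_of_lt hq) hq1 (by omega)
    have h2 : q ^ (m + k + 4) < 1 := pow_lt_one₀ (le_of_lt hq) hq1 (by omega)
    simp only [one_pow]
    nlinarith
  have hform : ∀ u : ℝ, h₂ u = F + E * u + (a * A) * u ^ (m + 2)
      + (-(a * z₂)) * u ^ (m + 3) + (b * A) * u ^ (m + k + 4)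
      + (-(b * z₂)) * u ^ (m + k + 5) := by
    intro u
    rw [hh₂ u, hxi u]
    rw [hFdef, hEdef]
    ring

  have hpow0 : ∀ j : ℕ, 1 ≤ j → (0:ℝ) ^ j = 0 := fun j hj => zero_pow (by omega)
  -- master 6-term list for h₂ and 5-term list for its derivative
  have hfun6 : h₂ = evalL [(F,0),(E,1),(a*A, m+2),(-(a*z₂), m+3),(b*A, m+k+4),(-(b*z₂), m+k+5)] := by
    funext u
    rw [hform u]
    simp only [evalL_cons, evalL_nil]
    ring
  have hd5 : deriv h₂ = evalL [(E,0),(a*A*((m+2:ℕ):ℝ), m+1),(-(a*z₂*((m+3:ℕ):ℝ)), m+2),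
      (b*A*((m+k+4:ℕ):ℝ), m+k+3),(-(b*z₂*((m+k+5:ℕ):ℝ)), m+k+4)] := by
    rw [hfun6, deriv_evalL]
    funext u
    simp only [derivL, List.map_cons, List.map_nil, evalL_cons, evalL_nil]
    push_cast
    ring
  have hdiff : Differentiable ℝ h₂ := by rw [hfun6]; exact differentiable_evalL _
  have hcont : Continuous h₂ := hdiff.continuous
  have hcd : Continuous (deriv h₂) := by rw [hd5]; exact continuous_evalL _
  have h20' : h₂ 0 = F := by
    rw [hform 0, hpow0 (m+2) (by omega), hpow0 (m+3) (by omega),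
      hpow0 (m+k+4) (by omega), hpow0 (m+k+5) (by omega)]
    ring
  have hF : F < 0 := by rw [← h20']; exact h20
  have hdq0 : deriv h₂ 0 = E := by
    rw [hd5]
    simp only [evalL_cons, evalL_nil]
    rw [hpow0 (m+1) (by omega), hpow0 (m+2) (by omega),
      hpow0 (m+k+3) (by omega), hpow0 (m+k+4) (by omega)]
    ring
  have haA : 0 < a * A := mul_pos ha hA
  have haz : 0 < a * z₂ := mul_pos ha hz₂
  have hbA : 0 < b * A := mul_pos hb hA
  have hbz : 0 < b * z₂ := mul_pos hb hz₂
  have c1 : (0:ℝ) < ((m+2:ℕ):ℝ) := by positivity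
  have c2 : (0:ℝ) < ((m+3:ℕ):ℝ) := by positivity
  have c3 : (0:ℝ) < ((m+k+4:ℕ):ℝ) := by positivity
  have c4 : (0:ℝ) < ((m+k+5:ℕ):ℝ) := by positivity
  have bound2 := bound_roots m k (a*A) (a*z₂) (b*A) (b*z₂) E F haA haz hbA hbz hF h₂ hfun6
  have boundD := bound_deriv m k (a*A*((m+2:ℕ):ℝ)) (a*z₂*((m+3:ℕ):ℝ))
    (b*A*((m+k+4:ℕ):ℝ)) (b*z₂*((m+k+5:ℕ):ℝ)) E
    (mul_pos haA c1) (mul_pos haz c2) (mul_pos hbA c3) (mul_pos hbz c4)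
    (deriv h₂) hd5
  have mvt : ∀ x y : ℝ, x < y → ∃ z ∈ Ioo x y, deriv h₂ z = (h₂ y - h₂ x)/(y - x) :=
    fun x y hxy => exists_deriv_eq_slope h₂ hxy hcont.continuousOn hdiff.differentiableOn
  have rolle : ∀ x y : ℝ, x < y → h₂ x = 0 → h₂ y = 0 → ∃ z ∈ Ioo x y, deriv h₂ z = 0 :=
    fun x y hxy hx hy => exists_deriv_eq_zero hxy hcont.continuousOn (by rw [hx, hy])
  have ivt2 : ∀ x y : ℝ, x ≤ y → h₂ x < 0 → 0 < h₂ y → ∃ z ∈ Ioo x y, h₂ z = 0 := by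
    intro x y hxy hx hy
    obtain ⟨z, hz, hz0⟩ := intermediate_value_Ioo hxy hcont.continuousOn
      (show (0:ℝ) ∈ Ioo (h₂ x) (h₂ y) from ⟨hx, hy⟩)
    exact ⟨z, hz, hz0⟩
  have ivtd_dec : ∀ x y : ℝ, x ≤ y → deriv h₂ y < 0 → 0 < deriv h₂ x →
      ∃ z ∈ Ioo x y, deriv h₂ z = 0 := by
    intro x y hxy hy hx
    obtain ⟨z, hz, hz0⟩ := intermediate_value_Ioo' hxy hcd.continuousOn
      (show (0:ℝ) ∈ Ioo (deriv h₂ y) (deriv h₂ x) from ⟨hy, hx⟩)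
    exact ⟨z, hz, hz0⟩
  have ivtd_inc : ∀ x y : ℝ, x ≤ y → deriv h₂ x < 0 → 0 < deriv h₂ y →
      ∃ z ∈ Ioo x y, deriv h₂ z = 0 := by
    intro x y hxy hx hy
    obtain ⟨z, hz, hz0⟩ := intermediate_value_Ioo hxy hcd.continuousOn
      (show (0:ℝ) ∈ Ioo (deriv h₂ x) (deriv h₂ y) from ⟨hx, hy⟩)
    exact ⟨z, hz, hz0⟩
  obtain ⟨q', hq'mem, hq'root⟩ := hmid
  have hq'1 : q' < 1 := hq'mem.2
  have hqq' : q < q' := hq'mem.1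
  have huniq : ∀ y ∈ Ioo q 1, h₂ y = 0 → y = q' := by
    intro y hy hyr
    by_contra hne
    have hA1A2 : min y q' < max y q' := min_lt_max.mpr hne
    have hmin_mem : q < min y q' := lt_min hy.1 hqq'
    have hmax_lt : max y q' < 1 := max_lt hy.2 hq'1
    have hminroot : h₂ (min y q') = 0 := by
      rcases min_choice y q' with h | h <;> rw [h] <;> assumption
    have hmaxroot : h₂ (max y q') = 0 := by
      rcases max_choice y q' with h | h <;> rw [h] <;> assumption
    rcases h2q'.lt_or_eq with hdn | hdz
    · have hslope : Filter.Tendsto (slope h₂ q) (nhdsWithin q {q}ᶜ) (nhds (deriv h₂ q)) :=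
        hasDerivAt_iff_tendsto_slope.mp (hdiff q).hasDerivAt
      have hev : ∀ᶠ u in nhdsWithin q {q}ᶜ, slope h₂ q u < 0 :=
        hslope.eventually (eventually_lt_nhds hdn)
      have hle : nhdsWithin q (Iio q) ≤ nhdsWithin q {q}ᶜ :=
        nhdsWithin_mono q (fun x hx => by
          simp only [mem_compl_iff, mem_singleton_iff]
          exact ne_of_lt hx)
      have hIoo : Ioo (0:ℝ) q ∈ nhdsWithin q (Iio q) :=
        Ioo_mem_nhdsLT_of_mem ⟨hq, le_refl q⟩
      obtain ⟨w, hw1, hw2⟩ := ((hev.filter_mono hle).and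
        (Filter.eventually_of_mem hIoo (fun x hx => hx))).exists
      rw [slope_def_field, h2q, sub_zero] at hw1
      have hwpos : 0 < h₂ w := by
        rcases div_neg_iff.mp hw1 with ⟨h1, h2⟩ | ⟨h1, h2⟩
        · exact h1
        · exact absurd h2 (by linarith [hw2.2])
      obtain ⟨r₀, hr₀, hr₀r⟩ := ivt2 0 w (le_of_lt hw2.1) h20 hwpos
      have hcount := bound2 [r₀, q, min y q', max y q', 1]
        (by
          simp only [List.Chain', List.isChain_cons_cons, List.isChain_singleton, and_true]
          exact ⟨lt_trans hr₀.2 hw2.2, hmin_mem, hA1A2, hmax_lt⟩)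
        (by
          intro r hr
          simp only [List.mem_cons, List.not_mem_nil, or_false] at hr
          rcases hr with rfl | rfl | rfl | rfl | rfl
          · exact hr₀.1
          · exact hq
          · linarith
          · linarith
          · linarith)
        (by
          intro r hr
          simp only [List.mem_cons, List.not_mem_nil, or_false] at hr
          rcases hr with rfl | rfl | rfl | rfl | rfl
          · exact hr₀r
          · exact h2q
          · exact hminroot
          · exact hmaxroot
          · exact h21)
        ∅ (by simp)
      norm_num at hcount
    · have hcount := bound2 [q, min y q', max y q', 1]
        (by
          simp only [List.Chain', List.isChain_cons_cons, List.isChain_singleton, and_true]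
          exact ⟨hmin_mem, hA1A2, hmax_lt⟩)
        (by
          intro r hr
          simp only [List.mem_cons, List.not_mem_nil, or_false] at hr
          rcases hr with rfl | rfl | rfl | rfl
          · exact hq
          · linarith
          · linarith
          · linarith)
        (by
          intro r hr
          simp only [List.mem_cons, List.not_mem_nil, or_false] at hr
          rcases hr with rfl | rfl | rfl | rfl
          · exact h2q
          · exact hminroot
          · exact hmaxroot
          · exact h21)
        {q}
        (by
          intro x hx
          simp only [Finset.mem_singleton] at hx
          subst hx
          exact ⟨by simp, hdz⟩)
      norm_num at hcount
  refine ⟨⟨q', ⟨⟨hq'mem, hq'root⟩, fun y hy => huniq y hy.1 hy.2⟩⟩, ?_⟩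
  rcases h2q'.lt_or_eq with hdn | hdz
  · have hslope : Filter.Tendsto (slope h₂ q) (nhdsWithin q {q}ᶜ) (nhds (deriv h₂ q)) :=
      hasDerivAt_iff_tendsto_slope.mp (hdiff q).hasDerivAt
    have hev : ∀ᶠ u in nhdsWithin q {q}ᶜ, slope h₂ q u < 0 :=
      hslope.eventually (eventually_lt_nhds hdn)
    have hle : nhdsWithin q (Ioi q) ≤ nhdsWithin q {q}ᶜ :=
      nhdsWithin_mono q (fun x hx => by
        simp only [mem_compl_iff, mem_singleton_iff]
        exact ne_of_gt hx)
    have hevr : ∀ᶠ u in nhdsWithin q (Ioi q), h₂ u < 0 := by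
      filter_upwards [hev.filter_mono hle, self_mem_nhdsWithin] with u hu hu'
      rw [slope_def_field, h2q, sub_zero] at hu
      rcases div_neg_iff.mp hu with ⟨h1, h2⟩ | ⟨h1, h2⟩
      · exact absurd h2 (by simp only [mem_Ioi] at hu'; linarith)
      · exact h1
    have hmem : {u : ℝ | h₂ u < 0} ∈ nhdsWithin q (Ioi q) := hevr
    obtain ⟨v, hv, hsub⟩ := mem_nhdsGT_iff_exists_Ioo_subset.mp hmem
    simp only [mem_Ioi] at hv
    refine ⟨v - q, by linarith, fun u hu => ?_⟩
    have hu' : u ∈ Ioo q v := by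
      constructor
      · exact hu.1
      · have := hu.2; linarith
    exact hsub hu'
  · have hnr : ∀ r ∈ Ioo (0:ℝ) q, h₂ r ≠ 0 := by
      intro r hr hrr
      have hcount := bound2 [r, q, q', 1]
        (by
          simp only [List.Chain', List.isChain_cons_cons, List.isChain_singleton, and_true]
          exact ⟨hr.2, hqq', hq'1⟩)
        (by
          intro x hx
          simp only [List.mem_cons, List.not_mem_nil, or_false] at hx
          rcases hx with rfl | rfl | rfl | rfl
          · exact hr.1
          · exact hq
          · linarith
          · linarith)
        (by
          intro x hx
          simp only [List.mem_cons, List.not_mem_nil, or_false] at hx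
          rcases hx with rfl | rfl | rfl | rfl
          · exact hrr
          · exact h2q
          · exact hq'root
          · exact h21)
        {q}
        (by
          intro x hx
          simp only [Finset.mem_singleton] at hx
          subst hx
          exact ⟨by simp, hdz⟩)
      norm_num at hcount
    have hlt : ∀ u ∈ Ioo (0:ℝ) q, h₂ u < 0 := by
      intro u hu
      rcases lt_trichotomy (h₂ u) 0 with h | h | h
      · exact h
      · exact absurd h (hnr u hu)
      · exfalso
        obtain ⟨z, hz, hzr⟩ := ivt2 0 u (le_of_lt hu.1) h20 h
        exact hnr z ⟨hz.1, lt_trans hz.2 hu.2⟩ hzr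
    have hnegI : ∀ u ∈ Ioo q q', h₂ u < 0 := by
      intro u₀ hu₀
      by_contra hge
      push_neg at hge
      rcases hge.lt_or_eq with hpos | heq
      swap
      · have := huniq u₀ ⟨hu₀.1, lt_trans hu₀.2 hq'1⟩ heq.symm
        exact absurd this (ne_of_lt hu₀.2)
      have hposI : ∀ v, q < v → v ≤ u₀ → 0 < h₂ v := by
        intro v hv1 hv2
        rcases lt_trichotomy (h₂ v) 0 with h | h | h
        · exfalso
          have hvu : v < u₀ := lt_of_le_of_ne hv2 (fun hh => by rw [hh] at h; linarith)
          obtain ⟨z, hz, hzr⟩ := ivt2 v u₀ (le_of_lt hvu) h hpos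
          have hz1 : z ∈ Ioo q 1 := ⟨lt_trans hv1 hz.1, by
            have h1 := hz.2
            have h2 := hu₀.2
            linarith⟩
          have heqz := huniq z hz1 hzr
          rw [heqz] at hz
          have := hz.2
          linarith [hu₀.2]
        · exfalso
          have hv1' : v ∈ Ioo q 1 := ⟨hv1, by
            have := hu₀.2
            linarith⟩
          have heqv := huniq v hv1' h
          rw [heqv] at hv2
          linarith [hu₀.2]
        · exact h
      obtain ⟨β, hβmem, hβval⟩ := mvt q u₀ hu₀.1
      have hβpos : 0 < deriv h₂ β := by
        rw [hβval, h2q, sub_zero]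
        exact div_pos hpos (by linarith [hu₀.1])
      obtain ⟨γ, hγmem, hγval⟩ := mvt u₀ q' hu₀.2
      have hγneg : deriv h₂ γ < 0 := by
        rw [hγval, hq'root, zero_sub]
        exact div_neg_of_neg_of_pos (by linarith) (by linarith [hu₀.2])
      obtain ⟨z₁', hz₁mem, hz₁val⟩ := ivtd_dec β γ
        (by linarith [hβmem.2, hγmem.1]) hγneg hβpos
      obtain ⟨z₂', hz₂mem, hz₂val⟩ := rolle q' 1 hq'1 hq'root h21
      by_cases hLm : ∃ w, w ∈ Ioo (0:ℝ) q ∧ ∀ x ∈ Ioo w q, 0 ≤ deriv h₂ x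
      · by_cases hRm : ∃ v, v ∈ Ioo q u₀ ∧ ∀ x ∈ Ioo q v, 0 ≤ deriv h₂ x
        · obtain ⟨w, hwmem, hwprop⟩ := hLm
          obtain ⟨v, hvmem, hvprop⟩ := hRm
          have hlocmin : IsLocalMin (deriv h₂) q := by
            have hIoo : Ioo w v ∈ nhds q := Ioo_mem_nhds hwmem.2 hvmem.1
            filter_upwards [hIoo] with x hx
            rw [hdz]
            rcases lt_trichotomy x q with h | h | h
            · exact hwprop x ⟨hx.1, h⟩
            · exact le_of_eq (by rw [h, hdz])
            · exact hvprop x ⟨h, hx.2⟩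
          have h2nd : deriv (deriv h₂) q = 0 := hlocmin.deriv_eq_zero
          rcases lt_or_ge E 0 with hE | hE
          · have hd0E : deriv h₂ 0 < 0 := by rw [hdq0]; exact hE
            have hhalf : h₂ (q/2) < 0 := hlt (q/2) ⟨by linarith, by linarith⟩
            obtain ⟨α, hαmem, hαval⟩ := mvt (q/2) q (by linarith)
            have hαpos : 0 < deriv h₂ α := by
              rw [hαval, h2q, zero_sub]
              exact div_pos (by linarith) (by linarith)
            obtain ⟨w₀, hw₀mem, hw₀val⟩ := ivtd_inc 0 α
              (by linarith [hαmem.1]) hd0E hαpos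
            have hcount := boundD [w₀, q, z₁', z₂']
              (by
                simp only [List.Chain', List.isChain_cons_cons, List.isChain_singleton, and_true]
                refine ⟨?_, ?_, ?_⟩
                · linarith [hw₀mem.2, hαmem.2]
                · linarith [hz₁mem.1, hβmem.1]
                · linarith [hz₁mem.2, hγmem.2, hz₂mem.1, hu₀.2])
              (by
                intro x hx
                simp only [List.mem_cons, List.not_mem_nil, or_false] at hx
                rcases hx with rfl | rfl | rfl | rfl
                · exact hw₀mem.1
                · exact hq
                · linarith [hz₁mem.1, hβmem.1]
                · linarith [hz₂mem.1])
              (by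
                intro x hx
                simp only [List.mem_cons, List.not_mem_nil, or_false] at hx
                rcases hx with rfl | rfl | rfl | rfl
                · exact hw₀val
                · exact hdz
                · exact hz₁val
                · exact hz₂val)
              {q}
              (by
                intro x hx
                simp only [Finset.mem_singleton] at hx
                subst hx
                exact ⟨by simp, h2nd⟩)
            rcases hcount with h | ⟨_, h⟩ <;> norm_num at h
          · have hcount := boundD [q, z₁', z₂']
              (by
                simp only [List.Chain', List.isChain_cons_cons, List.isChain_singleton, and_true]
                refine ⟨?_, ?_⟩
                · linarith [hz₁mem.1, hβmem.1]
                · linarith [hz₁mem.2, hγmem.2, hz₂mem.1, hu₀.2])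
              (by
                intro x hx
                simp only [List.mem_cons, List.not_mem_nil, or_false] at hx
                rcases hx with rfl | rfl | rfl
                · exact hq
                · linarith [hz₁mem.1, hβmem.1]
                · linarith [hz₂mem.1])
              (by
                intro x hx
                simp only [List.mem_cons, List.not_mem_nil, or_false] at hx
                rcases hx with rfl | rfl | rfl
                · exact hdz
                · exact hz₁val
                · exact hz₂val)
              {q}
              (by
                intro x hx
                simp only [Finset.mem_singleton] at hx
                subst hx
                exact ⟨by simp, h2nd⟩)
            rcases hcount with h | ⟨hE', h⟩
            · norm_num at h
            · linarith
        · push_neg at hRm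
          have hposR : ∀ v, q < v → v ≤ u₀ → ∃ x ∈ Ioo q v, 0 < deriv h₂ x := by
            intro v hv1 hv2
            obtain ⟨x, hx, hxval⟩ := mvt q v hv1
            refine ⟨x, hx, ?_⟩
            rw [hxval, h2q, sub_zero]
            exact div_pos (hposI v hv1 hv2) (by linarith)
          have hv₀ : (q + u₀)/2 ∈ Ioo q u₀ := ⟨by linarith [hu₀.1], by linarith [hu₀.1]⟩
          obtain ⟨x₁, hx₁, hx₁n⟩ := hRm ((q + u₀)/2) hv₀
          obtain ⟨p₁, hp₁, hp₁p⟩ := hposR x₁ hx₁.1 (by linarith [hx₁.2, hv₀.2])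
          obtain ⟨r₁, hr₁, hr₁v⟩ := ivtd_dec p₁ x₁ (le_of_lt hp₁.2) hx₁n hp₁p
          obtain ⟨x₂, hx₂, hx₂n⟩ := hRm p₁ ⟨hp₁.1, by linarith [hp₁.2, hx₁.2, hv₀.2]⟩
          obtain ⟨p₂, hp₂, hp₂p⟩ := hposR x₂ hx₂.1
            (by linarith [hx₂.2, hp₁.2, hx₁.2, hv₀.2])
          obtain ⟨r₂, hr₂, hr₂v⟩ := ivtd_dec p₂ x₂ (le_of_lt hp₂.2) hx₂n hp₂p
          obtain ⟨x₃, hx₃, hx₃n⟩ := hRm p₂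
            ⟨hp₂.1, by linarith [hp₂.2, hx₂.2, hp₁.2, hx₁.2, hv₀.2]⟩
          obtain ⟨p₃, hp₃, hp₃p⟩ := hposR x₃ hx₃.1
            (by linarith [hx₃.2, hp₂.2, hx₂.2, hp₁.2, hx₁.2, hv₀.2])
          obtain ⟨r₃, hr₃, hr₃v⟩ := ivtd_dec p₃ x₃ (le_of_lt hp₃.2) hx₃n hp₃p
          have hcount := boundD [q, r₃, r₂, r₁, z₂']
            (by
              simp only [List.Chain', List.isChain_cons_cons, List.isChain_singleton, and_true]
              refine ⟨?_, ?_, ?_, ?_⟩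
              · linarith [hr₃.1, hp₃.1]
              · linarith [hr₃.2, hx₃.2, hp₂.2, hr₂.1]
              · linarith [hr₂.2, hx₂.2, hp₁.2, hr₁.1]
              · linarith [hr₁.2, hx₁.2, hv₀.2, hu₀.2, hz₂mem.1])
            (by
              intro x hx
              simp only [List.mem_cons, List.not_mem_nil, or_false] at hx
              rcases hx with rfl | rfl | rfl | rfl | rfl
              · exact hq
              · linarith [hr₃.1, hp₃.1]
              · linarith [hr₂.1, hp₂.1]
              · linarith [hr₁.1, hp₁.1]
              · linarith [hz₂mem.1])
            (by
              intro x hx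
              simp only [List.mem_cons, List.not_mem_nil, or_false] at hx
              rcases hx with rfl | rfl | rfl | rfl | rfl
              · exact hdz
              · exact hr₃v
              · exact hr₂v
              · exact hr₁v
              · exact hz₂val)
            ∅ (by simp)
          rcases hcount with h | ⟨_, h⟩ <;> norm_num at h
      · push_neg at hLm
        have hposL : ∀ w, 0 < w → w < q → ∃ x ∈ Ioo w q, 0 < deriv h₂ x := by
          intro w hw1 hw2
          obtain ⟨x, hx, hxval⟩ := mvt w q hw2
          refine ⟨x, hx, ?_⟩
          rw [hxval, h2q, zero_sub]
          have := hlt w ⟨hw1, hw2⟩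
          exact div_pos (by linarith) (by linarith)
        obtain ⟨α₁, hα₁, hα₁p⟩ := hposL (q/2) (by linarith) (by linarith)
        obtain ⟨x₁, hx₁, hx₁n⟩ := hLm α₁ ⟨by linarith [hα₁.1], hα₁.2⟩
        obtain ⟨w₁, hw₁, hw₁v⟩ := ivtd_dec α₁ x₁ (le_of_lt hx₁.1) hx₁n hα₁p
        obtain ⟨α₂, hα₂, hα₂p⟩ := hposL x₁ (by linarith [hx₁.1, hα₁.1]) hx₁.2
        obtain ⟨w₂, hw₂, hw₂v⟩ := ivtd_inc x₁ α₂ (le_of_lt hα₂.1) hx₁n hα₂p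
        obtain ⟨x₂, hx₂, hx₂n⟩ := hLm α₂ ⟨by linarith [hα₂.1, hx₁.1, hα₁.1], hα₂.2⟩
        obtain ⟨w₃, hw₃, hw₃v⟩ := ivtd_dec α₂ x₂ (le_of_lt hx₂.1) hx₂n hα₂p
        have hcount := boundD [w₁, w₂, w₃, q, z₁', z₂']
          (by
            simp only [List.Chain', List.isChain_cons_cons, List.isChain_singleton, and_true]
            refine ⟨?_, ?_, ?_, ?_, ?_⟩
            · linarith [hw₁.2, hw₂.1]
            · linarith [hw₂.2, hw₃.1]
            · linarith [hw₃.2, hx₂.2]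
            · linarith [hz₁mem.1, hβmem.1]
            · linarith [hz₁mem.2, hγmem.2, hz₂mem.1, hu₀.2])
          (by
            intro x hx
            simp only [List.mem_cons, List.not_mem_nil, or_false] at hx
            rcases hx with rfl | rfl | rfl | rfl | rfl | rfl
            · linarith [hw₁.1, hα₁.1]
            · linarith [hw₂.1, hx₁.1, hα₁.1]
            · linarith [hw₃.1, hα₂.1, hx₁.1, hα₁.1]
            · exact hq
            · linarith [hz₁mem.1, hβmem.1]
            · linarith [hz₂mem.1])
          (by
            intro x hx
            simp only [List.mem_cons, List.not_mem_nil, or_false] at hx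
            rcases hx with rfl | rfl | rfl | rfl | rfl | rfl
            · exact hw₁v
            · exact hw₂v
            · exact hw₃v
            · exact hdz
            · exact hz₁val
            · exact hz₂val)
          ∅ (by simp)
        rcases hcount with h | ⟨_, h⟩ <;> norm_num at h
    refine ⟨q' - q, by linarith, fun u hu => ?_⟩
    apply hnegI
    constructor
    · exact hu.1
    · have := hu.2; linarith
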